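/- Let $Q(\lambda) = \lambda^p$ on $\Lambda = [-1, 1]$ for an odd integer $p \geq 3$, with uniform prior density $\pi^{prior} = 1/2$. Then the push-forward density of the prior with respect to Lebesgue measure on $[-1,1]$ is $\pi^{Q(prior)}(q) = \frac{1}{2p} |q|^{1/p - 1}$ for $q \neq 0$; in particular it is nonconstant, and hence for a nonconstant observed density $\pi^{obs}$ the consistent posterior $\pi^{post}(\lambda) = \frac{1}{2} \pi^{obs}(\lambda^p) / \pi^{Q(prior)}(\lambda^p) = p\, |\lambda|^{p-1} \pi^{obs}(\lambda^p)$ differs from the statistical Bayesian posterior $\tilde{\pi}^{post}(\lambda) \propto \pi^{obs}(\lambda^p)$ on a set of positive measure. -/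

import Mathlib

open MeasureTheory ENNReal

/-- One-dimensional change of variables for lower Lebesgue integrals. -/
lemma lintegral_image_eq_lintegral_abs_deriv_mul' {s : Set ℝ} {f f' : ℝ → ℝ}
    (hs : MeasurableSet s) (hf' : ∀ x ∈ s, HasDerivWithinAt f (f' x) s x)
    (hf : Set.InjOn f s) (g : ℝ → ℝ≥0∞) :
    ∫⁻ x in f '' s, g x = ∫⁻ x in s, ENNReal.ofReal |f' x| * g (f x) := by
  simpa only [ContinuousLinearMap.det_toSpanSingleton] using
    lintegral_image_eq_lintegral_abs_det_fderiv_mul volume hs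
      (fun x hx => (hf' x hx).hasFDerivWithinAt) hf g

lemma pointwise_density_calc (p : ℕ) (hp : 3 ≤ p) {x : ℝ} (hx : x ≠ 0) :
    |(p : ℝ) * x ^ (p - 1)| * (1 / (2 * p) * |x ^ p| ^ ((1 : ℝ) / p - 1)) = 1 / 2 := by
  have hpR : (0 : ℝ) < p := by exact_mod_cast Nat.lt_of_lt_of_le (by norm_num) hp
  have ha : 0 < |x| := abs_pos.mpr hx
  have h2 : |(p : ℝ) * x ^ (p - 1)| = (p : ℝ) * |x| ^ (p - 1) := by
    rw [abs_mul, abs_pow, Nat.abs_cast]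
  have h3 : (|x| ^ p : ℝ) ^ ((1 : ℝ) / p - 1) = |x| ^ ((1 : ℝ) - p) := by
    rw [← Real.rpow_natCast |x| p, ← Real.rpow_mul ha.le]
    congr 1
    field_simp
  have h4 : (|x| ^ (p - 1) : ℝ) = |x| ^ ((p : ℝ) - 1) := by
    rw [← Real.rpow_natCast |x| (p - 1), Nat.cast_sub (by omega), Nat.cast_one]
  have h5 : |x| ^ ((p : ℝ) - 1) * |x| ^ ((1 : ℝ) - p) = 1 := by
    rw [← Real.rpow_add ha]
    norm_num
  rw [h2, abs_pow, h3, h4]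
  calc (p : ℝ) * |x| ^ ((p : ℝ) - 1) * (1 / (2 * p) * |x| ^ ((1 : ℝ) - p))
      = ((p : ℝ) * (1 / (2 * p))) * (|x| ^ ((p : ℝ) - 1) * |x| ^ ((1 : ℝ) - p)) := by ring
    _ = 1 / 2 := by rw [h5]; field_simp

theorem odd_power_map_posteriors_differ
    (p : ℕ) (hp : 3 ≤ p) (hodd : Odd p)
    (πobs : ℝ → ℝ) (hπobs : Measurable πobs) (hobs0 : ∀ q, 0 ≤ πobs q)
    (hobs1 : ∫ q in Set.Icc (-1 : ℝ) 1, πobs q = 1)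
    (hnonconst : ∃ q₁ ∈ Set.Icc (-1 : ℝ) 1, ∃ q₂ ∈ Set.Icc (-1 : ℝ) 1,
      πobs q₁ ≠ πobs q₂) :
    (Measure.map (fun l : ℝ => l ^ p)
        ((volume.restrict (Set.Icc (-1 : ℝ) 1)).withDensity
          fun _ => ENNReal.ofReal (1 / 2))
      = (volume.restrict (Set.Icc (-1 : ℝ) 1)).withDensity
          fun q => ENNReal.ofReal (1 / (2 * p) * |q| ^ ((1 : ℝ) / p - 1))) ∧
    0 < volume {l ∈ Set.Icc (-1 : ℝ) 1 |
        (p : ℝ) * |l| ^ (p - 1) * πobs (l ^ p)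
          ≠ πobs (l ^ p) / ∫ x in Set.Icc (-1 : ℝ) 1, πobs (x ^ p)} := by
  have hp1 : 1 ≤ p := by omega
  have hpR : (0 : ℝ) < p := by exact_mod_cast Nat.lt_of_lt_of_le (by norm_num) hp
  have hφm : Measurable fun l : ℝ => l ^ p := measurable_id.pow_const p
  have hmono : StrictMono fun l : ℝ => l ^ p := Odd.strictMono_pow hodd
  have himg : (fun l : ℝ => l ^ p) '' Set.Icc (-1) 1 = Set.Icc (-1 : ℝ) 1 := by
    apply Set.Subset.antisymm
    · rintro q ⟨l, hl, rfl⟩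
      constructor
      · calc (-1 : ℝ) = (-1 : ℝ) ^ p := (hodd.neg_one_pow).symm
          _ ≤ l ^ p := hmono.monotone hl.1
      · calc l ^ p ≤ (1 : ℝ) ^ p := hmono.monotone hl.2
          _ = 1 := one_pow p
    · have := intermediate_value_Icc (by norm_num : (-1 : ℝ) ≤ 1)
        ((continuous_pow p).continuousOn (s := Set.Icc (-1 : ℝ) 1))
      rwa [hodd.neg_one_pow, one_pow] at this
  -- Key computation: the lintegral of the density equals half the measure of the preimage.
  have key : ∀ A : Set ℝ, MeasurableSet A →
      (∫⁻ q in A ∩ Set.Icc (-1 : ℝ) 1,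
          ENNReal.ofReal (1 / (2 * p) * |q| ^ ((1 : ℝ) / p - 1)))
        = ENNReal.ofReal (1 / 2)
            * volume ((fun l : ℝ => l ^ p) ⁻¹' A ∩ Set.Icc (-1 : ℝ) 1) := by
    intro A hA
    set s : Set ℝ := (fun l : ℝ => l ^ p) ⁻¹' A ∩ Set.Icc (-1 : ℝ) 1 with hs_def
    have hs : MeasurableSet s := (hφm hA).inter measurableSet_Icc
    have himgs : (fun l : ℝ => l ^ p) '' s = A ∩ Set.Icc (-1 : ℝ) 1 := by
      rw [hs_def, Set.image_preimage_inter, himg]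
    rw [← himgs,
      lintegral_image_eq_lintegral_abs_deriv_mul' (f' := fun x => (p : ℝ) * x ^ (p - 1)) hs
        (fun x _ => (hasDerivAt_pow p x).hasDerivWithinAt) (hmono.injective.injOn)
        (fun q => ENNReal.ofReal (1 / (2 * p) * |q| ^ ((1 : ℝ) / p - 1)))]
    rw [setLIntegral_congr (diff_null_ae_eq_self (s := s) (measure_singleton (0 : ℝ))).symm]
    rw [setLIntegral_congr_fun_ae (hs.diff (measurableSet_singleton 0))
      (ae_of_all _ (fun x hx => ?_)), setLIntegral_const, measure_diff_null
        (measure_singleton (0 : ℝ))]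
    rw [← ENNReal.ofReal_mul (abs_nonneg _), pointwise_density_calc p hp hx.2]
  constructor
  · refine Measure.ext fun A hA => ?_
    rw [withDensity_const, Measure.map_smul, Measure.smul_apply,
      Measure.map_apply hφm hA, Measure.restrict_apply (hφm hA),
      withDensity_apply _ hA, Measure.restrict_restrict hA, key A hA, smul_eq_mul]
  · by_contra hcon
    have hT0 : volume {l ∈ Set.Icc (-1 : ℝ) 1 |
        (p : ℝ) * |l| ^ (p - 1) * πobs (l ^ p)
          ≠ πobs (l ^ p) / ∫ x in Set.Icc (-1 : ℝ) 1, πobs (x ^ p)} = 0 :=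
      le_antisymm (not_lt.mp hcon) zero_le
    set Z : ℝ := ∫ x in Set.Icc (-1 : ℝ) 1, πobs (x ^ p) with hZ_def
    -- the level set of p |l|^(p-1) is at most two points
    have hnullC : volume {l : ℝ | (p : ℝ) * |l| ^ (p - 1) = Z⁻¹} = 0 := by
      rcases Set.eq_empty_or_nonempty {l : ℝ | (p : ℝ) * |l| ^ (p - 1) = Z⁻¹} with h | ⟨a, ha⟩
      · rw [h]; exact measure_empty
      · refine measure_mono_null (fun l hl => ?_)
          (((Set.finite_singleton a).insert (-a)).measure_zero volume)
        have h1 : |l| ^ (p - 1) = |a| ^ (p - 1) :=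
          mul_left_cancel₀ (ne_of_gt hpR) (hl.trans ha.symm)
        have h2 : |l| = |a| :=
          (pow_left_strictMonoOn₀ (n := p - 1) (by omega)).injOn
            (abs_nonneg l) (abs_nonneg a) h1
        rcases abs_eq_abs.mp h2 with h | h
        · exact Set.mem_insert_of_mem _ (by simpa using h)
        · exact Set.mem_insert_iff.mpr (Or.inl h)
    -- a.e. on [-1,1], πobs (l^p) = 0
    have hae2 : ∀ᵐ l : ℝ, l ∈ Set.Icc (-1 : ℝ) 1 → πobs (l ^ p) = 0 := by
      filter_upwards [measure_eq_zero_iff_ae_notMem.mp hT0, measure_eq_zero_iff_ae_notMem.mp hnullC,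
        measure_eq_zero_iff_ae_notMem.mp (measure_singleton (0 : ℝ))] with l hl hlC hl0 hmem
      by_contra hy
      apply hl
      refine ⟨hmem, fun heq => ?_⟩
      apply hlC
      have : (p : ℝ) * |l| ^ (p - 1) * πobs (l ^ p) = Z⁻¹ * πobs (l ^ p) := by
        rw [heq, div_eq_mul_inv, mul_comm]
      exact mul_right_cancel₀ hy this
    -- transfer to a.e. vanishing of πobs on [-1,1] via the key computation
    have hBm : MeasurableSet {q : ℝ | πobs q ≠ 0} :=
      (hπobs (measurableSet_singleton 0)).compl
    have hpre0 : volume ((fun l : ℝ => l ^ p) ⁻¹' {q : ℝ | πobs q ≠ 0}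
        ∩ Set.Icc (-1 : ℝ) 1) = 0 := by
      refine measure_eq_zero_iff_ae_notMem.mpr ?_
      filter_upwards [hae2] with l hl
      rintro ⟨h1, h2⟩
      exact h1 (hl h2)
    have hlz : (∫⁻ q in {q : ℝ | πobs q ≠ 0} ∩ Set.Icc (-1 : ℝ) 1,
        ENNReal.ofReal (1 / (2 * p) * |q| ^ ((1 : ℝ) / p - 1))) = 0 := by
      rw [key _ hBm, hpre0, mul_zero]
    have hdm : Measurable fun q : ℝ =>
        ENNReal.ofReal (1 / (2 * p) * |q| ^ ((1 : ℝ) / p - 1)) :=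
      ((continuous_abs.measurable.pow_const _).const_mul _).ennreal_ofReal
    have hae3 := (setLIntegral_eq_zero_iff (hBm.inter measurableSet_Icc) hdm).mp hlz
    have hBnull : volume ({q : ℝ | πobs q ≠ 0} ∩ Set.Icc (-1 : ℝ) 1) = 0 := by
      refine measure_eq_zero_iff_ae_notMem.mpr ?_
      filter_upwards [hae3,
        measure_eq_zero_iff_ae_notMem.mp (measure_singleton (0 : ℝ))] with q hq hq0 hmem
      have h0 := hq hmem
      have hpos : 0 < 1 / (2 * (p : ℝ)) * |q| ^ ((1 : ℝ) / p - 1) := by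
        have : (0 : ℝ) < |q| := abs_pos.mpr hq0
        positivity
      exact (ENNReal.ofReal_pos.mpr hpos).ne' h0
    have : (∫ q in Set.Icc (-1 : ℝ) 1, πobs q) = 0 := by
      refine integral_eq_zero_of_ae ((ae_restrict_iff' measurableSet_Icc).mpr ?_)
      filter_upwards [measure_eq_zero_iff_ae_notMem.mp hBnull] with q hq hmem
      by_contra hne
      exact hq ⟨hne, hmem⟩
    rw [hobs1] at this
    exact one_ne_zero this
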